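/- arXiv:2410.00677 — 3 statements merged into one kernel-verified Lean document; each statement's English description precedes it below -/
import Mathlib

section
/- Let d ≥ 1, ℓ ∈ ℕ and α ≥ 0. There is a constant C = C(d, ℓ, α) such that for all t > 0 and all x ∈ ℝ^d, |x|^α · |Δ^ℓ q_t(x)| ≤ C · t^{α/2 - ℓ} · q_{2t}(x). -/
open MeasureTheory Real
open scoped ENNReal NNReal
noncomputable section

abbrev Esp (d : ℕ) := EuclideanSpace ℝ (Fin d)

/-- Partial derivative in direction `i`. -/
def pderiv (d : ℕ) (i : Fin d) (f : Esp d → ℝ) : Esp d → ℝ :=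
  fun x => fderiv ℝ f x (EuclideanSpace.single i 1)

/-- Laplacian `Δ f = ∑ i ∂²f/∂x_i²`. -/
def laplacian (d : ℕ) (f : Esp d → ℝ) : Esp d → ℝ :=
  fun x => ∑ i : Fin d, pderiv d i (pderiv d i f) x

/-- Heat kernel on ℝ^d: `q_t(x) = (4πt)^{-d/2} exp(-|x|²/(4t))`. -/
def heatKernel (d : ℕ) (t : ℝ) (x : Esp d) : ℝ :=
  (4 * π * t) ^ (-(d : ℝ) / 2) * Real.exp (-‖x‖ ^ 2 / (4 * t))

namespace Stmt1Aux

open Polynomial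

lemma pow_le_exp_aux (k : ℕ) (c : ℝ) (hc : 0 < c) (u : ℝ) (hu : 0 ≤ u) :
    u ^ k ≤ c⁻¹ ^ k * k.factorial * Real.exp (c * u) := by
  have h1 : (c * u) ^ k / k.factorial ≤ Real.exp (c * u) := by
    calc (c * u) ^ k / k.factorial
        ≤ ∑ i ∈ Finset.range (k + 1), (c * u) ^ i / i.factorial :=
          Finset.single_le_sum (f := fun i => (c * u) ^ i / (i.factorial : ℝ))
            (fun i _ => by positivity) (by simp)
      _ ≤ Real.exp (c * u) := Real.sum_le_exp_of_nonneg (by positivity) _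
  have h2 : u ^ k = c⁻¹ ^ k * (c * u) ^ k := by
    rw [mul_pow, ← mul_assoc, ← mul_pow, inv_mul_cancel₀ hc.ne']; simp
  rw [div_le_iff₀ (by positivity)] at h1
  calc u ^ k = c⁻¹ ^ k * (c * u) ^ k := h2
    _ ≤ c⁻¹ ^ k * (Real.exp (c * u) * k.factorial) := by gcongr
    _ = c⁻¹ ^ k * k.factorial * Real.exp (c * u) := by ring

lemma poly_le_exp_aux (P : Polynomial ℝ) (c : ℝ) (hc : 0 < c) :
    ∃ C : ℝ, 0 < C ∧ ∀ u : ℝ, 0 ≤ u → |P.eval u| ≤ C * Real.exp (c * u) := by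
  refine ⟨1 + ∑ k ∈ Finset.range (P.natDegree + 1), |P.coeff k| * (c⁻¹ ^ k * k.factorial),
    by positivity, fun u hu => ?_⟩
  have h := P.eval_eq_sum_range (x := u)
  calc |P.eval u| = |∑ k ∈ Finset.range (P.natDegree + 1), P.coeff k * u ^ k| := by rw [h]
    _ ≤ ∑ k ∈ Finset.range (P.natDegree + 1), |P.coeff k * u ^ k| := Finset.abs_sum_le_sum_abs _ _
    _ ≤ ∑ k ∈ Finset.range (P.natDegree + 1), |P.coeff k| * (c⁻¹ ^ k * k.factorial) * Real.exp (c * u) := by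
        apply Finset.sum_le_sum
        intro k _
        rw [abs_mul, abs_pow, abs_of_nonneg hu, mul_assoc]
        apply mul_le_mul_of_nonneg_left _ (abs_nonneg _)
        simpa [mul_assoc] using pow_le_exp_aux k c hc u hu
    _ ≤ (1 + ∑ k ∈ Finset.range (P.natDegree + 1), |P.coeff k| * (c⁻¹ ^ k * k.factorial)) * Real.exp (c * u) := by
        rw [← Finset.sum_mul]
        have : (0:ℝ) < Real.exp (c * u) := Real.exp_pos _
        nlinarith [Finset.sum_nonneg (fun k (_ : k ∈ Finset.range (P.natDegree + 1)) =>
          mul_nonneg (abs_nonneg (P.coeff k)) (by positivity : (0:ℝ) ≤ c⁻¹ ^ k * k.factorial))]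

lemma rpow_poly_bound (Q : Polynomial ℝ) (β : ℝ) (hβ : 0 ≤ β) :
    ∃ C : ℝ, 0 < C ∧ ∀ u : ℝ, 0 ≤ u →
      u ^ β * |Q.eval u| * Real.exp (-(u/4)) ≤ C * Real.exp (-(u/8)) := by
  obtain ⟨C1, hC1, h1⟩ := poly_le_exp_aux ((1 + X) ^ ⌈β⌉₊) (1/16) (by norm_num)
  obtain ⟨C2, hC2, h2⟩ := poly_le_exp_aux Q (1/16) (by norm_num)
  refine ⟨C1 * C2, by positivity, fun u hu => ?_⟩
  have hrp : u ^ β ≤ C1 * Real.exp (1/16 * u) := by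
    calc u ^ β ≤ (1 + u) ^ β := by
          apply Real.rpow_le_rpow hu (by linarith) hβ
      _ ≤ (1 + u) ^ (⌈β⌉₊ : ℝ) :=
          Real.rpow_le_rpow_of_exponent_le (by linarith) (Nat.le_ceil _)
      _ = (1 + u) ^ (⌈β⌉₊ : ℕ) := by rw [Real.rpow_natCast]
      _ ≤ C1 * Real.exp (1/16 * u) := by
          have := h1 u hu
          simpa [abs_of_nonneg (by positivity : (0:ℝ) ≤ (1+u) ^ ⌈β⌉₊)] using this
  have hq := h2 u hu
  calc u ^ β * |Q.eval u| * Real.exp (-(u/4))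
      ≤ (C1 * Real.exp (1/16 * u)) * (C2 * Real.exp (1/16 * u)) * Real.exp (-(u/4)) := by
        gcongr
    _ = C1 * C2 * Real.exp (-(u/8)) := by
        rw [mul_mul_mul_comm, mul_assoc, ← Real.exp_add, ← Real.exp_add]
        congr 1
        ring

noncomputable def Dop (Q : Polynomial ℝ) : Polynomial ℝ := derivative Q - C 4⁻¹ * Q

noncomputable def Lop (d : ℕ) (Q : Polynomial ℝ) : Polynomial ℝ :=
  4 * X * Dop (Dop Q) + C (2 * (d : ℝ)) * Dop Q

noncomputable def QQ (d : ℕ) : ℕ → Polynomial ℝ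
  | 0 => 1
  | ℓ + 1 => Lop d (QQ d ℓ)

/-- scalar profile -/
noncomputable def G (t : ℝ) (Q : Polynomial ℝ) (s : ℝ) : ℝ :=
  Q.eval (s / t) * Real.exp (-s / (4 * t))

lemma hasDerivAt_G (t : ℝ) (ht : 0 < t) (Q : Polynomial ℝ) (s : ℝ) :
    HasDerivAt (G t Q) (t⁻¹ * G t (Dop Q) s) s := by
  have h1 : HasDerivAt (fun s : ℝ => Q.eval (s / t)) ((derivative Q).eval (s / t) * t⁻¹) s := by
    have := (Q.hasDerivAt (s / t)).comp s ((hasDerivAt_id s).div_const t)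
    simpa [div_eq_mul_inv, Function.comp_def] using this
  have h2 : HasDerivAt (fun s : ℝ => Real.exp (-s / (4 * t)))
      (Real.exp (-s / (4 * t)) * (-(4 * t)⁻¹)) s := by
    have hinner : HasDerivAt (fun s : ℝ => -s / (4 * t)) (-(4 * t)⁻¹) s := by
      simpa [div_eq_mul_inv] using ((hasDerivAt_id s).neg.div_const (4 * t))
    simpa [mul_comm] using hinner.exp
  have := h1.mul h2
  refine HasDerivAt.congr_deriv this ?_
  have ht' : t ≠ 0 := ht.ne'
  simp only [G, Dop, eval_sub, eval_mul, eval_C]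
  field_simp
  ring

lemma hasFDerivAt_GQ (d : ℕ) (t : ℝ) (ht : 0 < t) (c : ℝ) (Q : Polynomial ℝ) (x : Esp d) :
    HasFDerivAt (fun x : Esp d => c * G t Q (‖x‖ ^ 2))
      ((c * (t⁻¹ * G t (Dop Q) (‖x‖ ^ 2))) • (2 • (innerSL ℝ x))) x := by
  have hn : HasFDerivAt (fun x : Esp d => ‖x‖ ^ 2) (2 • (innerSL ℝ x)) x :=
    (hasStrictFDerivAt_norm_sq x).hasFDerivAt
  have hg : HasDerivAt (fun s => c * G t Q s) (c * (t⁻¹ * G t (Dop Q) (‖x‖ ^ 2))) (‖x‖ ^ 2) :=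
    (hasDerivAt_G t ht Q (‖x‖ ^ 2)).const_mul c
  exact HasDerivAt.comp_hasFDerivAt (h₂ := fun s => c * G t Q s) x hg hn

lemma pderiv_GQ (d : ℕ) (t : ℝ) (ht : 0 < t) (i : Fin d) (c : ℝ) (Q : Polynomial ℝ) :
    pderiv d i (fun x : Esp d => c * G t Q (‖x‖ ^ 2))
      = fun x : Esp d => (c * t⁻¹ * G t (Dop Q) (‖x‖ ^ 2)) * (2 * x i) := by
  funext x
  rw [pderiv, (hasFDerivAt_GQ d t ht c Q x).fderiv]
  simp [EuclideanSpace.inner_single_right, real_inner_comm]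
  ring_nf
  tauto

lemma pderiv2_GQ (d : ℕ) (t : ℝ) (ht : 0 < t) (i : Fin d) (c : ℝ) (Q : Polynomial ℝ) (x : Esp d) :
    pderiv d i (pderiv d i (fun x : Esp d => c * G t Q (‖x‖ ^ 2))) x
      = (c * t⁻¹ * G t (Dop Q) (‖x‖ ^ 2)) * 2
        + (2 * x i) * ((c * t⁻¹ * (t⁻¹ * G t (Dop (Dop Q)) (‖x‖ ^ 2))) * (2 * x i)) := by
  rw [pderiv_GQ d t ht i c Q]
  have h1 : HasFDerivAt (fun x : Esp d => c * t⁻¹ * G t (Dop Q) (‖x‖ ^ 2))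
      ((c * t⁻¹ * (t⁻¹ * G t (Dop (Dop Q)) (‖x‖ ^ 2))) • (2 • (innerSL ℝ x))) x :=
    hasFDerivAt_GQ d t ht (c * t⁻¹) (Dop Q) x
  have h2 : HasFDerivAt (fun x : Esp d => 2 * x i)
      ((2 : ℝ) • (EuclideanSpace.proj i : Esp d →L[ℝ] ℝ)) x :=
    (EuclideanSpace.proj i : Esp d →L[ℝ] ℝ).hasFDerivAt.const_mul 2
  have h3 := h1.mul h2
  rw [pderiv, HasFDerivAt.fderiv (f := fun x : Esp d => c * t⁻¹ * G t (Dop Q) (‖x‖ ^ 2) * (2 * x i)) h3]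
  simp [EuclideanSpace.inner_single_right, real_inner_comm, EuclideanSpace.single_apply]

lemma laplacian_GQ (d : ℕ) (t : ℝ) (ht : 0 < t) (c : ℝ) (Q : Polynomial ℝ) :
    laplacian d (fun x : Esp d => c * G t Q (‖x‖ ^ 2))
      = fun x : Esp d => (c * t⁻¹) * G t (Lop d Q) (‖x‖ ^ 2) := by
  funext x
  rw [laplacian]
  have hsum : ∀ i : Fin d, pderiv d i (pderiv d i (fun x : Esp d => c * G t Q (‖x‖ ^ 2))) x
      = (c * t⁻¹ * G t (Dop Q) (‖x‖ ^ 2)) * 2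
        + (2 * x i) * ((c * t⁻¹ * (t⁻¹ * G t (Dop (Dop Q)) (‖x‖ ^ 2))) * (2 * x i)) :=
    fun i => pderiv2_GQ d t ht i c Q x
  rw [Finset.sum_congr rfl (fun i _ => hsum i)]
  rw [Finset.sum_add_distrib, Finset.sum_const]
  have hnorm : ∑ i : Fin d, x i ^ 2 = ‖x‖ ^ 2 := by
    rw [EuclideanSpace.norm_eq, Real.sq_sqrt (by positivity)]
    simp [sq_abs]
  set K := c * t⁻¹ * (t⁻¹ * G t (Dop (Dop Q)) (‖x‖ ^ 2)) with hK
  have hx2 : ∑ i : Fin d, (2 * x i) * (K * (2 * x i)) = 4 * K * ‖x‖ ^ 2 := by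
    calc ∑ i : Fin d, (2 * x i) * (K * (2 * x i)) = ∑ i : Fin d, 4 * K * x i ^ 2 :=
          Finset.sum_congr rfl (fun i _ => by ring)
      _ = 4 * K * ∑ i : Fin d, x i ^ 2 := by rw [Finset.mul_sum]
      _ = 4 * K * ‖x‖ ^ 2 := by rw [hnorm]
  rw [hx2, hK]
  simp only [G, Lop, Finset.card_univ, Fintype.card_fin, eval_add, eval_mul, eval_C,
    eval_ofNat, eval_X, nsmul_eq_mul]
  have ht' : t ≠ 0 := ht.ne'
  field_simp
  ring

lemma heat_iterate (d : ℕ) (t : ℝ) (ht : 0 < t) (ℓ : ℕ) :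
    (laplacian d)^[ℓ] (heatKernel d t)
      = fun x : Esp d => ((4 * π * t) ^ (-(d : ℝ) / 2) * (t⁻¹) ^ ℓ) * G t (QQ d ℓ) (‖x‖ ^ 2) := by
  induction ℓ with
  | zero =>
      funext x
      simp [heatKernel, G, QQ]
  | succ n ih =>
      rw [Function.iterate_succ_apply', ih, laplacian_GQ d t ht]
      funext x
      show _ * G t (Lop d (QQ d n)) (‖x‖ ^ 2) = _ * G t (QQ d (n + 1)) (‖x‖ ^ 2)
      rw [show QQ d (n + 1) = Lop d (QQ d n) from rfl]
      ring

end Stmt1Aux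

/-- Heat kernel bound: `|x|^α |Δ^ℓ q_t(x)| ≤ C t^{α/2-ℓ} q_{2t}(x)`. -/
theorem stmt1 (d : ℕ) (hd : 1 ≤ d) (ℓ : ℕ) (α : ℝ) (hα : 0 ≤ α) :
    ∃ C : ℝ, 0 < C ∧ ∀ t : ℝ, 0 < t → ∀ x : Esp d,
      ‖x‖ ^ α * |((laplacian d)^[ℓ] (heatKernel d t)) x| ≤
        C * t ^ (α / 2 - ℓ) * heatKernel d (2 * t) x := by
  classical
  obtain ⟨C0, hC0, hbound⟩ := Stmt1Aux.rpow_poly_bound (Stmt1Aux.QQ d ℓ) (α / 2) (by linarith)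
  refine ⟨(2 : ℝ) ^ ((d : ℝ) / 2) * C0, by positivity, fun t ht x => ?_⟩
  set Q := Stmt1Aux.QQ d ℓ with hQ
  rw [Stmt1Aux.heat_iterate d t ht ℓ]
  set u := ‖x‖ ^ 2 / t with hu_def
  have hu : 0 ≤ u := by positivity
  have hc0 : (0:ℝ) < (4 * π * t) ^ (-(d : ℝ) / 2) := by
    apply Real.rpow_pos_of_pos
    have := Real.pi_pos
    positivity
  have hG : Stmt1Aux.G t Q (‖x‖ ^ 2) = Q.eval u * Real.exp (-(u/4)) := by
    rw [Stmt1Aux.G]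
    have harg : -‖x‖ ^ 2 / (4 * t) = -(u/4) := by
      rw [hu_def]; field_simp
    rw [harg]
  have hnorm_rpow : ‖x‖ ^ α = t ^ (α/2) * u ^ (α/2) := by
    have h1 : ‖x‖ ^ α = ((‖x‖ : ℝ) ^ (2:ℕ)) ^ (α / 2) := by
      rw [← Real.rpow_natCast ‖x‖ 2, ← Real.rpow_mul (norm_nonneg x)]
      rw [show ((2:ℕ):ℝ) * (α/2) = α by push_cast; ring]
    have h2 : (‖x‖ : ℝ) ^ (2:ℕ) = t * u := by
      rw [hu_def]; field_simp
    rw [h1, h2, Real.mul_rpow ht.le hu]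
  have hheat2 : heatKernel d (2 * t) x
      = 2 ^ (-(d:ℝ)/2) * ((4 * π * t) ^ (-(d : ℝ) / 2) * Real.exp (-(u/8))) := by
    rw [heatKernel]
    rw [show 4 * π * (2 * t) = 2 * (4 * π * t) by ring,
      Real.mul_rpow (by norm_num) (by positivity)]
    have harg : -‖x‖ ^ 2 / (4 * (2 * t)) = -(u/8) := by
      rw [hu_def]; field_simp; ring
    rw [harg, mul_assoc]
  have hts : t ^ (α/2 - ℓ) = t ^ (α/2) * (t⁻¹) ^ ℓ := by
    rw [Real.rpow_sub ht, div_eq_mul_inv, Real.rpow_natCast, inv_pow]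
  have h2pow : (2:ℝ) ^ ((d:ℝ)/2) * 2 ^ (-(d:ℝ)/2) = 1 := by
    rw [← Real.rpow_add (by norm_num)]
    rw [show (d:ℝ)/2 + -(d:ℝ)/2 = 0 by ring, Real.rpow_zero]
  have hkey := hbound u hu
  have hA : (0:ℝ) ≤ t ^ (α/2) * (t⁻¹) ^ ℓ * (4 * π * t) ^ (-(d : ℝ) / 2) := by positivity
  calc ‖x‖ ^ α * |(fun x : Esp d => ((4 * π * t) ^ (-(d : ℝ) / 2) * (t⁻¹) ^ ℓ)
          * Stmt1Aux.G t Q (‖x‖ ^ 2)) x|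
      = (t ^ (α/2) * (t⁻¹) ^ ℓ * (4 * π * t) ^ (-(d : ℝ) / 2))
        * (u ^ (α/2) * |Q.eval u| * Real.exp (-(u/4))) := by
        simp only [hG, hnorm_rpow]
        rw [abs_mul, abs_mul, abs_mul, abs_of_nonneg hc0.le,
          abs_of_nonneg (by positivity : (0:ℝ) ≤ (t⁻¹) ^ ℓ),
          abs_of_nonneg (Real.exp_pos _).le]
        ring
    _ ≤ (t ^ (α/2) * (t⁻¹) ^ ℓ * (4 * π * t) ^ (-(d : ℝ) / 2)) * (C0 * Real.exp (-(u/8))) :=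
        mul_le_mul_of_nonneg_left hkey hA
    _ = (2 : ℝ) ^ ((d : ℝ) / 2) * C0 * t ^ (α / 2 - ℓ) * heatKernel d (2 * t) x := by
        rw [hts, hheat2]
        linear_combination (-(C0 * t ^ (α/2) * t⁻¹ ^ ℓ * (4 * π * t) ^ (-(d:ℝ)/2)
          * Real.exp (-(u/8)))) * h2pow
end
end

section
/- Let d ≥ 1, p ∈ [1,∞], 0 ≤ α ≤ 1, x₀ ∈ ℝ^d, and let ϑ : ℝ^d → ℝ be continuously differentiable with |ϑ(x)| ≤ M and |∇ϑ(x)| ≤ L for all x. Define, for 0 < δ ≤ 1 and smooth compactly supported φ : ℝ^d → ℝ, the function (Δ_{ϑ,δ}φ)(x) = ϑ(δx + x₀) Δφ(x) + δ ∇ϑ(δx + x₀)·∇φ(x). Then there is a constant C = C(M, L, α, d) such that ‖ Δ_{ϑ,δ}φ − ϑ(x₀) Δφ ‖_{L^p(ℝ^d)} ≤ C δ^α ‖φ‖_{W̄^{2,p}_α}. -/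
open MeasureTheory Real
open scoped ENNReal NNReal
noncomputable section

/-- Multi-index partial derivative `∂_γ f`. -/
def mderiv (d : ℕ) (γ : Fin d → ℕ) (f : Esp d → ℝ) : Esp d → ℝ :=
  (List.finRange d).foldr (fun i g => (pderiv d i)^[γ i] g) f

/-- Weighted Sobolev norm
`‖f‖_{W̄^{k,p}_α} = ∑_{|γ| ≤ k} (‖∂_γ f‖_{L^p} + ‖|x|^α ∂_γ f‖_{L^p})`. -/
def wSobolevNorm (d k : ℕ) (p : ℝ≥0∞) (α : ℝ) (f : Esp d → ℝ) : ℝ≥0∞ :=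
  ∑ γ : (Fin d → Fin (k + 1)),
    if (∑ i, (γ i : ℕ)) ≤ k then
      eLpNorm (mderiv d (fun i => (γ i : ℕ)) f) p volume
        + eLpNorm (fun x => ‖x‖ ^ α * mderiv d (fun i => (γ i : ℕ)) f x) p volume
    else 0

/-- The localized divergence-form operator
`(Δ_{ϑ,δ}φ)(x) = ϑ(δx+x₀) Δφ(x) + δ ∇ϑ(δx+x₀)·∇φ(x)`. -/
def locDiffOp (d : ℕ) (ϑ : Esp d → ℝ) (x₀ : Esp d) (δ : ℝ) (φ : Esp d → ℝ) : Esp d → ℝ :=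
  fun x => ϑ (δ • x + x₀) * laplacian d φ x
    + δ * (inner ℝ (gradient ϑ (δ • x + x₀)) (gradient φ x) : ℝ)

lemma contDiff_pderiv (d : ℕ) (i : Fin d) (f : Esp d → ℝ) (hf : ContDiff ℝ (⊤:ℕ∞) f) :
    ContDiff ℝ (⊤:ℕ∞) (pderiv d i f) :=
  (hf.fderiv_right (m := (⊤:ℕ∞)) (by exact_mod_cast le_top)).clm_apply contDiff_const

lemma grad_apply (d : ℕ) (f : Esp d → ℝ) (x : Esp d) (i : Fin d) :
    gradient f x i = pderiv d i f x := by
  have h : (inner ℝ (gradient f x) (EuclideanSpace.single i (1:ℝ)) : ℝ)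
      = fderiv ℝ f x (EuclideanSpace.single i (1:ℝ)) := by
    rw [gradient]; exact InnerProductSpace.toDual_symm_apply
  rw [EuclideanSpace.inner_single_right] at h
  simpa [pderiv] using h

lemma norm_gradient_eq (d : ℕ) (f : Esp d → ℝ) (x : Esp d) :
    ‖gradient f x‖ = ‖fderiv ℝ f x‖ := by
  rw [gradient]; exact LinearIsometryEquiv.norm_map _ _

lemma coord_le_norm (d : ℕ) (v : Esp d) (i : Fin d) : |v i| ≤ ‖v‖ := by
  have h : (inner ℝ v (EuclideanSpace.single i (1:ℝ)) : ℝ) = v i := by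
    rw [EuclideanSpace.inner_single_right]; simp
  calc |v i| = |(inner ℝ v (EuclideanSpace.single i (1:ℝ)) : ℝ)| := by rw [h]
    _ ≤ ‖v‖ * ‖EuclideanSpace.single i (1:ℝ)‖ := abs_real_inner_le_norm _ _
    _ = ‖v‖ := by rw [EuclideanSpace.norm_single]; simp

lemma min_le_rpow_mix {a b α : ℝ} (ha : 0 ≤ a) (hb : 0 ≤ b) (hα0 : 0 ≤ α) (hα1 : α ≤ 1) :
    min a b ≤ a ^ (1 - α) * b ^ α := by
  rcases le_total a b with h | h
  · calc min a b = a := min_eq_left h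
    _ = a ^ (1 - α) * a ^ α := by
        rw [← Real.rpow_add' ha (by norm_num)]; simp
    _ ≤ a ^ (1 - α) * b ^ α := by gcongr
  · calc min a b = b := min_eq_right h
    _ = b ^ (1 - α) * b ^ α := by
        rw [← Real.rpow_add' hb (by norm_num)]; simp
    _ ≤ a ^ (1 - α) * b ^ α := by gcongr

lemma foldr_single (d : ℕ) (i : Fin d) (n : ℕ) (f : Esp d → ℝ) :
    ∀ l : List (Fin d), l.Nodup →
      (l.foldr (fun j g => (pderiv d j)^[if j = i then n else 0] g) f)
        = if i ∈ l then (pderiv d i)^[n] f else f := by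
  intro l hl
  induction l with
  | nil => simp
  | cons j t ih =>
    rcases List.nodup_cons.mp hl with ⟨hjt, ht⟩
    simp only [List.foldr_cons, ih ht]
    by_cases hji : j = i
    · subst hji
      have : j ∉ t := hjt
      simp [this]
    · simp [hji, List.mem_cons, Ne.symm hji]

lemma mderiv_single (d : ℕ) (i : Fin d) (n : ℕ) (f : Esp d → ℝ) :
    mderiv d (fun j => if j = i then n else 0) f = (pderiv d i)^[n] f := by
  unfold mderiv
  rw [foldr_single d i n f _ (List.nodup_finRange d)]
  simp [List.mem_finRange]

lemma le_wSobolevNorm₂ (d : ℕ) (p : ℝ≥0∞) (α : ℝ) (φ : Esp d → ℝ) (i : Fin d) :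
    eLpNorm (fun x => ‖x‖ ^ α * pderiv d i (pderiv d i φ) x) p volume
      ≤ wSobolevNorm d 2 p α φ := by
  classical
  set γ : Fin d → Fin 3 := fun j => if j = i then 2 else 0 with hγ
  have hco : (fun j => ((γ j : ℕ))) = fun j => if j = i then 2 else 0 := by
    funext j; simp only [hγ]; split_ifs <;> rfl
  have hsum : (∑ j, (γ j : ℕ)) = 2 := by
    rw [hco]; simp
  have hmd : mderiv d (fun j => (γ j : ℕ)) φ = pderiv d i (pderiv d i φ) := by
    rw [hco, mderiv_single]
    rfl
  have h1 : (if (∑ j, (γ j : ℕ)) ≤ 2 then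
      eLpNorm (mderiv d (fun j => (γ j : ℕ)) φ) p volume
        + eLpNorm (fun x => ‖x‖ ^ α * mderiv d (fun j => (γ j : ℕ)) φ x) p volume
    else 0) ≤ wSobolevNorm d 2 p α φ := by
    unfold wSobolevNorm
    exact Finset.single_le_sum
      (f := fun γ : Fin d → Fin 3 => if (∑ j, (γ j : ℕ)) ≤ 2 then
        eLpNorm (mderiv d (fun j => (γ j : ℕ)) φ) p volume
          + eLpNorm (fun x => ‖x‖ ^ α * mderiv d (fun j => (γ j : ℕ)) φ x) p volume
      else 0) (fun _ _ => zero_le) (Finset.mem_univ γ)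
  rw [hsum, if_pos (by norm_num), hmd] at h1
  exact le_trans le_add_self h1

lemma le_wSobolevNorm₁ (d : ℕ) (p : ℝ≥0∞) (α : ℝ) (φ : Esp d → ℝ) (i : Fin d) :
    eLpNorm (pderiv d i φ) p volume ≤ wSobolevNorm d 2 p α φ := by
  classical
  set γ : Fin d → Fin 3 := fun j => if j = i then 1 else 0 with hγ
  have hco : (fun j => ((γ j : ℕ))) = fun j => if j = i then 1 else 0 := by
    funext j; simp only [hγ]; split_ifs <;> rfl
  have hsum : (∑ j, (γ j : ℕ)) = 1 := by rw [hco]; simp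
  have hmd : mderiv d (fun j => (γ j : ℕ)) φ = pderiv d i φ := by
    rw [hco, mderiv_single]; rfl
  have h1 : (if (∑ j, (γ j : ℕ)) ≤ 2 then
      eLpNorm (mderiv d (fun j => (γ j : ℕ)) φ) p volume
        + eLpNorm (fun x => ‖x‖ ^ α * mderiv d (fun j => (γ j : ℕ)) φ x) p volume
    else 0) ≤ wSobolevNorm d 2 p α φ := by
    unfold wSobolevNorm
    exact Finset.single_le_sum
      (f := fun γ : Fin d → Fin 3 => if (∑ j, (γ j : ℕ)) ≤ 2 then
        eLpNorm (mderiv d (fun j => (γ j : ℕ)) φ) p volume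
          + eLpNorm (fun x => ‖x‖ ^ α * mderiv d (fun j => (γ j : ℕ)) φ x) p volume
      else 0) (fun _ _ => zero_le) (Finset.mem_univ γ)
  rw [hsum, if_pos (by norm_num), hmd] at h1
  exact le_trans le_self_add h1

/-- First-order expansion of the localized diffusion operator:
`‖Δ_{ϑ,δ}φ − ϑ(x₀)Δφ‖_{L^p} ≤ C δ^α ‖φ‖_{W̄^{2,p}_α}`. -/
theorem stmt6 (d : ℕ) (hd : 1 ≤ d) (p : ℝ≥0∞) (hp : 1 ≤ p)
    (α : ℝ) (hα0 : 0 ≤ α) (hα1 : α ≤ 1) (x₀ : Esp d)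
    (ϑ : Esp d → ℝ) (hϑ : ContDiff ℝ 1 ϑ)
    (M L : ℝ) (hM : ∀ x, |ϑ x| ≤ M) (hL : ∀ x, ‖gradient ϑ x‖ ≤ L) :
    ∃ C : ℝ, 0 < C ∧ ∀ δ : ℝ, 0 < δ → δ ≤ 1 →
      ∀ φ : Esp d → ℝ, ContDiff ℝ (⊤ : ℕ∞) φ → HasCompactSupport φ →
        eLpNorm (fun x => locDiffOp d ϑ x₀ δ φ x - ϑ x₀ * laplacian d φ x) p volume ≤
          ENNReal.ofReal (C * δ ^ α) * wSobolevNorm d 2 p α φ := by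
  have hM0 : 0 ≤ M := (abs_nonneg _).trans (hM 0)
  have hL0 : 0 ≤ L := (norm_nonneg _).trans (hL 0)
  set K : ℝ := (2*M+1) ^ (1-α) * (L+1) ^ α + (L+1) with hK
  have hKpos : 0 < K := by
    have h1 : (0:ℝ) < (2*M+1) ^ (1-α) := Real.rpow_pos_of_pos (by linarith) _
    have h2 : (0:ℝ) < (L+1) ^ α := Real.rpow_pos_of_pos (by linarith) _
    nlinarith
  refine ⟨K * (2*d), by positivity, ?_⟩
  intro δ hδ hδ1 φ hφ _hφc
  have hδα : (0:ℝ) < δ ^ α := Real.rpow_pos_of_pos hδ α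
  have hδa : δ ≤ δ ^ α := by
    calc δ = δ ^ (1:ℝ) := (Real.rpow_one δ).symm
    _ ≤ δ ^ α := Real.rpow_le_rpow_of_exponent_ge hδ hδ1 hα1
  -- continuity of derivatives
  have hφ1 : ∀ i, ContDiff ℝ (⊤:ℕ∞) (pderiv d i φ) := fun i => contDiff_pderiv d i φ hφ
  have hD1c : ∀ i, Continuous (pderiv d i φ) := fun i => (hφ1 i).continuous
  have hD2c : ∀ i, Continuous (pderiv d i (pderiv d i φ)) := fun i =>
    (contDiff_pderiv d i _ (hφ1 i)).continuous
  -- pointwise bound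
  have hpt : ∀ x, |locDiffOp d ϑ x₀ δ φ x - ϑ x₀ * laplacian d φ x| ≤
      K * δ ^ α * ((∑ i, ‖x‖ ^ α * |pderiv d i (pderiv d i φ) x|)
        + ∑ i, |pderiv d i φ x|) := by
    intro x
    have hxα : (0:ℝ) ≤ ‖x‖ ^ α := Real.rpow_nonneg (norm_nonneg x) α
    have hlip : |ϑ (δ • x + x₀) - ϑ x₀| ≤ L * (δ * ‖x‖) := by
      have := Convex.norm_image_sub_le_of_norm_fderiv_le
        (fun y _ => (hϑ.differentiable one_ne_zero).differentiableAt)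
        (fun y _ => by rw [← norm_gradient_eq]; exact hL y)
        convex_univ (Set.mem_univ x₀) (Set.mem_univ (δ • x + x₀))
      simpa [norm_smul, abs_of_pos hδ, mul_comm] using this
    have hbdd : |ϑ (δ • x + x₀) - ϑ x₀| ≤ 2*M+1 := by
      have h1 := hM (δ • x + x₀); have h2 := hM x₀
      calc |ϑ (δ • x + x₀) - ϑ x₀| ≤ |ϑ (δ • x + x₀)| + |ϑ x₀| := abs_sub _ _
      _ ≤ 2*M+1 := by linarith
    have hmin : |ϑ (δ • x + x₀) - ϑ x₀| ≤ (2*M+1) ^ (1-α) * (L+1) ^ α * (δ ^ α * ‖x‖ ^ α) := by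
      have h1 : |ϑ (δ • x + x₀) - ϑ x₀| ≤ min (2*M+1) ((L+1) * (δ * ‖x‖)) := by
        refine le_min hbdd (hlip.trans ?_)
        have : (0:ℝ) ≤ δ * ‖x‖ := by positivity
        nlinarith
      refine h1.trans ?_
      have h2 := min_le_rpow_mix (a := 2*M+1) (b := (L+1)*(δ*‖x‖))
        (by linarith) (by positivity) hα0 hα1
      refine h2.trans (le_of_eq ?_)
      rw [Real.mul_rpow (by linarith) (by positivity), Real.mul_rpow hδ.le (norm_nonneg x)]
      ring
    have hsplit : locDiffOp d ϑ x₀ δ φ x - ϑ x₀ * laplacian d φ x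
        = (ϑ (δ • x + x₀) - ϑ x₀) * laplacian d φ x
          + δ * (inner ℝ (gradient ϑ (δ • x + x₀)) (gradient φ x) : ℝ) := by
      simp only [locDiffOp]; ring
    set Sα := ∑ i, ‖x‖ ^ α * |pderiv d i (pderiv d i φ) x| with hSαdef
    set S1 := ∑ i, |pderiv d i φ x| with hS1def
    have hSα0 : 0 ≤ Sα := Finset.sum_nonneg fun i _ => by positivity
    have hS10 : 0 ≤ S1 := Finset.sum_nonneg fun i _ => abs_nonneg _
    have hA : |(ϑ (δ • x + x₀) - ϑ x₀) * laplacian d φ x|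
        ≤ (2*M+1) ^ (1-α) * (L+1) ^ α * δ ^ α * Sα := by
      rw [abs_mul]
      have hlap : |laplacian d φ x| ≤ ∑ i, |pderiv d i (pderiv d i φ) x| :=
        Finset.abs_sum_le_sum_abs _ _
      calc |ϑ (δ • x + x₀) - ϑ x₀| * |laplacian d φ x|
          ≤ ((2*M+1) ^ (1-α) * (L+1) ^ α * (δ ^ α * ‖x‖ ^ α)) *
              (∑ i, |pderiv d i (pderiv d i φ) x|) := by
            apply mul_le_mul hmin hlap (abs_nonneg _)
            positivity
      _ = (2*M+1) ^ (1-α) * (L+1) ^ α * δ ^ α * Sα := by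
            rw [hSαdef, Finset.mul_sum, Finset.mul_sum]
            exact Finset.sum_congr rfl fun i _ => by ring
    have hB : |δ * (inner ℝ (gradient ϑ (δ • x + x₀)) (gradient φ x) : ℝ)|
        ≤ (L+1) * δ ^ α * S1 := by
      have hinner : |(inner ℝ (gradient ϑ (δ • x + x₀)) (gradient φ x) : ℝ)| ≤ L * S1 := by
        rw [PiLp.inner_apply]
        calc |∑ i, (inner ℝ (gradient ϑ (δ • x + x₀) i) (gradient φ x i) : ℝ)|
            ≤ ∑ i, |(inner ℝ (gradient ϑ (δ • x + x₀) i) (gradient φ x i) : ℝ)| :=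
              Finset.abs_sum_le_sum_abs _ _
        _ ≤ ∑ i, L * |pderiv d i φ x| := by
              apply Finset.sum_le_sum
              intro i _
              have : (inner ℝ (gradient ϑ (δ • x + x₀) i) (gradient φ x i) : ℝ)
                  = gradient ϑ (δ • x + x₀) i * gradient φ x i := by
                simp [RCLike.inner_apply]; ring
              have hg : |gradient ϑ (δ • x + x₀) i| ≤ L :=
                (coord_le_norm d _ i).trans (hL _)
              rw [this, abs_mul, grad_apply d φ x i]
              exact mul_le_mul_of_nonneg_right hg (abs_nonneg _)
        _ = L * S1 := by rw [hS1def, Finset.mul_sum]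
      calc |δ * (inner ℝ (gradient ϑ (δ • x + x₀)) (gradient φ x) : ℝ)|
          = δ * |(inner ℝ (gradient ϑ (δ • x + x₀)) (gradient φ x) : ℝ)| := by
            rw [abs_mul, abs_of_pos hδ]
      _ ≤ δ * (L * S1) := by
            apply mul_le_mul_of_nonneg_left hinner hδ.le
      _ ≤ δ ^ α * (L * S1) :=
            mul_le_mul_of_nonneg_right hδa (mul_nonneg hL0 hS10)
      _ = L * (δ ^ α * S1) := by ring
      _ ≤ (L+1) * (δ ^ α * S1) :=
            mul_le_mul_of_nonneg_right (by linarith) (by positivity)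
      _ = (L+1) * δ ^ α * S1 := by ring
    calc |locDiffOp d ϑ x₀ δ φ x - ϑ x₀ * laplacian d φ x|
        ≤ |(ϑ (δ • x + x₀) - ϑ x₀) * laplacian d φ x|
          + |δ * (inner ℝ (gradient ϑ (δ • x + x₀)) (gradient φ x) : ℝ)| := by
          rw [hsplit]; exact abs_add_le _ _
    _ ≤ (2*M+1) ^ (1-α) * (L+1) ^ α * δ ^ α * Sα + (L+1) * δ ^ α * S1 :=
        add_le_add hA hB
    _ ≤ K * δ ^ α * (Sα + S1) := by
        rw [hK]
        have h1 : (0:ℝ) < (2*M+1) ^ (1-α) * (L+1) ^ α :=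
          mul_pos (Real.rpow_pos_of_pos (by linarith) _) (Real.rpow_pos_of_pos (by linarith) _)
        nlinarith [mul_nonneg (mul_nonneg h1.le hδα.le) hS10,
          mul_nonneg (mul_nonneg (by linarith : (0:ℝ) ≤ L+1) hδα.le) hSα0]
  -- measurability
  have hmes2 : ∀ i : Fin d, AEStronglyMeasurable
      (fun x : Esp d => ‖x‖ ^ α * |pderiv d i (pderiv d i φ) x|) volume := fun i =>
    (((Real.continuous_rpow_const hα0).comp continuous_norm).mul ((hD2c i).abs)).aestronglyMeasurable
  have hmes1 : ∀ i : Fin d, AEStronglyMeasurable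
      (fun x : Esp d => |pderiv d i φ x|) volume := fun i =>
    ((hD1c i).abs).aestronglyMeasurable
  set W := wSobolevNorm d 2 p α φ with hW
  -- main estimate
  have key : eLpNorm (fun x => locDiffOp d ϑ x₀ δ φ x - ϑ x₀ * laplacian d φ x) p volume
      ≤ ENNReal.ofReal (K * δ ^ α) * ((d : ℝ≥0∞) * W + (d : ℝ≥0∞) * W) := by
    calc eLpNorm (fun x => locDiffOp d ϑ x₀ δ φ x - ϑ x₀ * laplacian d φ x) p volume
        ≤ eLpNorm (fun x => K * δ ^ α * ((∑ i, ‖x‖ ^ α * |pderiv d i (pderiv d i φ) x|)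
            + ∑ i, |pderiv d i φ x|)) p volume := by
          apply eLpNorm_mono
          intro x
          rw [Real.norm_eq_abs, Real.norm_eq_abs]
          exact (hpt x).trans (le_abs_self _)
    _ = ENNReal.ofReal (K * δ ^ α) * eLpNorm
          (fun x => (∑ i, ‖x‖ ^ α * |pderiv d i (pderiv d i φ) x|)
            + ∑ i, |pderiv d i φ x|) p volume := by
          rw [show (fun x : Esp d => K * δ ^ α * ((∑ i, ‖x‖ ^ α * |pderiv d i (pderiv d i φ) x|)
              + ∑ i, |pderiv d i φ x|))
            = (K * δ ^ α) • (fun x : Esp d => (∑ i, ‖x‖ ^ α * |pderiv d i (pderiv d i φ) x|)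
              + ∑ i, |pderiv d i φ x|) from rfl]
          rw [eLpNorm_const_smul, Real.enorm_eq_ofReal (by positivity)]
    _ ≤ ENNReal.ofReal (K * δ ^ α) * ((d : ℝ≥0∞) * W + (d : ℝ≥0∞) * W) := by
          apply mul_le_mul_right
          calc eLpNorm (fun x => (∑ i, ‖x‖ ^ α * |pderiv d i (pderiv d i φ) x|)
              + ∑ i, |pderiv d i φ x|) p volume
              ≤ eLpNorm (fun x => ∑ i, ‖x‖ ^ α * |pderiv d i (pderiv d i φ) x|) p volume
                + eLpNorm (fun x => ∑ i, |pderiv d i φ x|) p volume := by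
                apply eLpNorm_add_le _ _ hp
                · exact (Finset.aestronglyMeasurable_fun_sum _ fun i _ => hmes2 i)
                · exact (Finset.aestronglyMeasurable_fun_sum _ fun i _ => hmes1 i)
          _ ≤ (d : ℝ≥0∞) * W + (d : ℝ≥0∞) * W := by
                apply add_le_add
                · calc eLpNorm (fun x => ∑ i, ‖x‖ ^ α * |pderiv d i (pderiv d i φ) x|) p volume
                      = eLpNorm (∑ i : Fin d,
                          fun x => ‖x‖ ^ α * |pderiv d i (pderiv d i φ) x|) p volume := by
                        congr 1; funext x; simp [Finset.sum_apply]
                  _ ≤ ∑ i : Fin d, eLpNorm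
                        (fun x => ‖x‖ ^ α * |pderiv d i (pderiv d i φ) x|) p volume :=
                        eLpNorm_sum_le (fun i _ => hmes2 i) hp
                  _ ≤ ∑ _i : Fin d, W := by
                        apply Finset.sum_le_sum
                        intro i _
                        have heq : eLpNorm
                            (fun x => ‖x‖ ^ α * |pderiv d i (pderiv d i φ) x|) p volume
                            = eLpNorm
                            (fun x => ‖x‖ ^ α * pderiv d i (pderiv d i φ) x) p volume := by
                          apply eLpNorm_congr_norm_ae
                          filter_upwards with x
                          rw [Real.norm_eq_abs, Real.norm_eq_abs, abs_mul, abs_mul, abs_abs]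
                        rw [heq]
                        exact le_wSobolevNorm₂ d p α φ i
                  _ = (d : ℝ≥0∞) * W := by simp [mul_comm]
                · calc eLpNorm (fun x => ∑ i, |pderiv d i φ x|) p volume
                      = eLpNorm (∑ i : Fin d, fun x => |pderiv d i φ x|) p volume := by
                        congr 1; funext x; simp [Finset.sum_apply]
                  _ ≤ ∑ i : Fin d, eLpNorm (fun x => |pderiv d i φ x|) p volume :=
                        eLpNorm_sum_le (fun i _ => hmes1 i) hp
                  _ ≤ ∑ _i : Fin d, W := by
                        apply Finset.sum_le_sum
                        intro i _
                        have heq : eLpNorm (fun x => |pderiv d i φ x|) p volume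
                            = eLpNorm (pderiv d i φ) p volume := by
                          apply eLpNorm_congr_norm_ae
                          filter_upwards with x
                          rw [Real.norm_eq_abs, Real.norm_eq_abs, abs_abs]
                        rw [heq]
                        exact le_wSobolevNorm₁ d p α φ i
                  _ = (d : ℝ≥0∞) * W := by simp [mul_comm]
  refine key.trans (le_of_eq ?_)
  have hC : ENNReal.ofReal (K * (2*d) * δ ^ α)
      = ENNReal.ofReal (K * δ ^ α) * ((2*d : ℕ) : ℝ≥0∞) := by
    rw [show K * (2*(d:ℝ)) * δ ^ α = (K * δ ^ α) * ((2*d : ℕ) : ℝ) by push_cast; ring,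
      ENNReal.ofReal_mul (by positivity), ENNReal.ofReal_natCast]
  rw [hC]
  push_cast
  ring
end
end

section
/- Let d ≥ 1, b ∈ ℝ^d, ℓ ∈ ℕ, and let φ : ℝ^d → ℝ be smooth. Then for all x ∈ ℝ^d, ⟨b, x⟩ (Δ^{ℓ+1} φ)(x) + ⟨b, ∇(Δ^ℓ φ)(x)⟩ = Δ^ℓ( y ↦ ⟨b, y⟩ (Δφ)(y) + (1 − 2ℓ) ⟨b, ∇φ(y)⟩ )(x); that is, the operator φ ↦ ⟨b,x⟩Δφ + ⟨b,∇φ⟩ applied to Δ^ℓ φ is itself an ℓ-fold Laplacian of an explicit function built from φ. -/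
open MeasureTheory Real
open scoped ENNReal NNReal
noncomputable section

namespace Stmt9Aux

/-- Directional derivative in direction `b`. -/
def Db (d : ℕ) (b : Esp d) (f : Esp d → ℝ) : Esp d → ℝ := fun x => fderiv ℝ f x b

/-- Standard basis vector. -/
def Eb (d : ℕ) (i : Fin d) : Esp d := EuclideanSpace.single i (1 : ℝ)

lemma h1top : ((⊤:ℕ∞) : WithTop ℕ∞) ≠ 0 := by simp
lemma h2top : minSmoothness ℝ 2 ≤ ((⊤:ℕ∞) : WithTop ℕ∞) := by
  rw [minSmoothness_of_isRCLikeNormedField]; exact WithTop.coe_le_coe.2 le_top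

variable {d : ℕ}

lemma contDiff_Db {b : Esp d} {f : Esp d → ℝ} (hf : ContDiff ℝ (⊤:ℕ∞) f) :
    ContDiff ℝ (⊤:ℕ∞) (Db d b f) :=
  (hf.fderiv_right (le_of_eq rfl)).clm_apply contDiff_const

lemma lap_eq (f : Esp d → ℝ) (x : Esp d) :
    laplacian d f x = ∑ i : Fin d, Db d (Eb d i) (Db d (Eb d i) f) x := rfl

lemma contDiff_lap {f : Esp d → ℝ} (hf : ContDiff ℝ (⊤:ℕ∞) f) :
    ContDiff ℝ (⊤:ℕ∞) (laplacian d f) :=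
  ContDiff.sum fun _ _ => contDiff_Db (contDiff_Db hf)

lemma Db_comm {f : Esp d → ℝ} (hf : ContDiff ℝ (⊤:ℕ∞) f) (v w : Esp d) :
    Db d v (Db d w f) = Db d w (Db d v f) := by
  funext x
  have hd1 : DifferentiableAt ℝ (fderiv ℝ f) x :=
    ((hf.fderiv_right (m := (⊤:ℕ∞)) (le_of_eq rfl)).differentiable h1top) x
  have hsymm : IsSymmSndFDerivAt ℝ f x := hf.contDiffAt.isSymmSndFDerivAt h2top
  show fderiv ℝ (fun y => fderiv ℝ f y w) x v = fderiv ℝ (fun y => fderiv ℝ f y v) x w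
  rw [fderiv_clm_apply hd1 (differentiableAt_const w),
      fderiv_clm_apply hd1 (differentiableAt_const v)]
  simp [hsymm v w]

lemma Db_sum {g : Fin d → Esp d → ℝ} (hg : ∀ i, ContDiff ℝ (⊤:ℕ∞) (g i)) (v x : Esp d) :
    Db d v (fun y => ∑ i : Fin d, g i y) x = ∑ i : Fin d, Db d v (g i) x := by
  simp only [Db]
  rw [fderiv_fun_sum (fun i _ => ((hg i).differentiable h1top) x)]
  simp

lemma Db_add_smul {f g : Esp d → ℝ} (hf : Differentiable ℝ f) (hg : Differentiable ℝ g)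
    (c : ℝ) (v : Esp d) :
    Db d v (fun y => f y + c * g y) = fun x => Db d v f x + c * Db d v g x := by
  funext x
  simp only [Db]
  rw [fderiv_fun_add (hf x) ((hg x).const_mul c), fderiv_const_mul (hg x)]
  simp

lemma lap_Db_comm {f : Esp d → ℝ} (hf : ContDiff ℝ (⊤:ℕ∞) f) (b : Esp d) :
    laplacian d (Db d b f) = Db d b (laplacian d f) := by
  funext x
  have key : ∀ i : Fin d,
      Db d (Eb d i) (Db d (Eb d i) (Db d b f))
        = Db d b (Db d (Eb d i) (Db d (Eb d i) f)) := by
    intro i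
    rw [Db_comm hf (Eb d i) b, Db_comm (contDiff_Db hf) (Eb d i) b]
  calc laplacian d (Db d b f) x
      = ∑ i : Fin d, Db d (Eb d i) (Db d (Eb d i) (Db d b f)) x := rfl
    _ = ∑ i : Fin d, Db d b (Db d (Eb d i) (Db d (Eb d i) f)) x := by
        exact Finset.sum_congr rfl fun i _ => by rw [key i]
    _ = Db d b (fun y => ∑ i : Fin d, Db d (Eb d i) (Db d (Eb d i) f) y) x :=
        (Db_sum (fun i => contDiff_Db (contDiff_Db hf)) b x).symm
    _ = Db d b (laplacian d f) x := rfl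

lemma inner_grad (b : Esp d) (f : Esp d → ℝ) (x : Esp d) :
    (inner ℝ b (gradient f x) : ℝ) = Db d b f x := by
  rw [real_inner_comm]
  exact InnerProductSpace.toDual_symm_apply

lemma inner_single (b : Esp d) (i : Fin d) : (inner ℝ b (Eb d i) : ℝ) = b i := by
  rw [Eb, EuclideanSpace.inner_single_right]; simp

lemma Db_decomp (b : Esp d) (f : Esp d → ℝ) (x : Esp d) :
    Db d b f x = ∑ i : Fin d, (inner ℝ b (Eb d i) : ℝ) * Db d (Eb d i) f x := by
  have hb : ∑ i : Fin d, b i • Eb d i = b := by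
    have := (EuclideanSpace.basisFun (Fin d) ℝ).sum_repr b
    simpa [Eb, EuclideanSpace.basisFun_apply, EuclideanSpace.basisFun_repr] using this
  simp only [Db, inner_single]
  conv_lhs => rw [← hb]
  rw [map_sum]
  simp

lemma contDiff_inner (b : Esp d) :
    ContDiff ℝ (⊤:ℕ∞) (fun y : Esp d => (inner ℝ b y : ℝ)) :=
  (innerSL ℝ b).contDiff

lemma Db_mul {g : Esp d → ℝ} (hg : Differentiable ℝ g) (b v : Esp d) :
    Db d v (fun y => (inner ℝ b y : ℝ) * g y) =
      fun x => (inner ℝ b x : ℝ) * Db d v g x + (inner ℝ b v : ℝ) * g x := by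
  funext x
  simp only [Db]
  have hm : DifferentiableAt ℝ (fun y : Esp d => (inner ℝ b y : ℝ)) x :=
    (innerSL ℝ b).differentiable.differentiableAt
  rw [fderiv_fun_mul hm (hg x)]
  have hfd : fderiv ℝ (fun y : Esp d => (inner ℝ b y : ℝ)) x = innerSL ℝ b :=
    (innerSL ℝ b).fderiv
  simp only [ContinuousLinearMap.add_apply, ContinuousLinearMap.smul_apply, smul_eq_mul, hfd,
    innerSL_apply_apply]
  ring

lemma lap_mul {g : Esp d → ℝ} (hg : ContDiff ℝ (⊤:ℕ∞) g) (b : Esp d) :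
    laplacian d (fun y => (inner ℝ b y : ℝ) * g y) =
      fun x => (inner ℝ b x : ℝ) * laplacian d g x + 2 * Db d b g x := by
  funext x
  have hg' : Differentiable ℝ g := hg.differentiable h1top
  have hDg : ∀ v : Esp d, ContDiff ℝ (⊤:ℕ∞) (Db d v g) := fun v => contDiff_Db hg
  have step : ∀ i : Fin d,
      Db d (Eb d i) (Db d (Eb d i) (fun y => (inner ℝ b y : ℝ) * g y)) x
        = (inner ℝ b x : ℝ) * Db d (Eb d i) (Db d (Eb d i) g) x
          + 2 * ((inner ℝ b (Eb d i) : ℝ) * Db d (Eb d i) g x) := by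
    intro i
    have hfprod : Differentiable ℝ (fun y : Esp d => (inner ℝ b y : ℝ) * Db d (Eb d i) g y) :=
      ((contDiff_inner b).mul (hDg (Eb d i))).differentiable h1top
    rw [Db_mul hg' b (Eb d i),
        Db_add_smul hfprod hg' ((inner ℝ b (Eb d i) : ℝ)) (Eb d i),
        Db_mul ((hDg (Eb d i)).differentiable h1top) b (Eb d i)]
    ring
  calc laplacian d (fun y => (inner ℝ b y : ℝ) * g y) x
      = ∑ i : Fin d, ((inner ℝ b x : ℝ) * Db d (Eb d i) (Db d (Eb d i) g) x
          + 2 * ((inner ℝ b (Eb d i) : ℝ) * Db d (Eb d i) g x)) :=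
        Finset.sum_congr rfl fun i _ => step i
    _ = (inner ℝ b x : ℝ) * ∑ i : Fin d, Db d (Eb d i) (Db d (Eb d i) g) x
          + 2 * ∑ i : Fin d, (inner ℝ b (Eb d i) : ℝ) * Db d (Eb d i) g x := by
        rw [Finset.sum_add_distrib, ← Finset.mul_sum, ← Finset.mul_sum]
    _ = (inner ℝ b x : ℝ) * laplacian d g x + 2 * Db d b g x := by
        rw [← lap_eq, ← Db_decomp]

lemma lap_add_smul {f g : Esp d → ℝ} (hf : ContDiff ℝ (⊤:ℕ∞) f) (hg : ContDiff ℝ (⊤:ℕ∞) g)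
    (c : ℝ) :
    laplacian d (fun y => f y + c * g y) = fun x => laplacian d f x + c * laplacian d g x := by
  funext x
  have step : ∀ i : Fin d,
      Db d (Eb d i) (Db d (Eb d i) (fun y => f y + c * g y)) x
        = Db d (Eb d i) (Db d (Eb d i) f) x + c * Db d (Eb d i) (Db d (Eb d i) g) x := by
    intro i
    rw [Db_add_smul (hf.differentiable h1top) (hg.differentiable h1top) c (Eb d i),
        Db_add_smul ((contDiff_Db hf).differentiable h1top)
          ((contDiff_Db hg).differentiable h1top) c (Eb d i)]
  calc laplacian d (fun y => f y + c * g y) x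
      = ∑ i : Fin d, (Db d (Eb d i) (Db d (Eb d i) f) x
          + c * Db d (Eb d i) (Db d (Eb d i) g) x) :=
        Finset.sum_congr rfl fun i _ => step i
    _ = ∑ i : Fin d, Db d (Eb d i) (Db d (Eb d i) f) x
          + c * ∑ i : Fin d, Db d (Eb d i) (Db d (Eb d i) g) x := by
        rw [Finset.sum_add_distrib, ← Finset.mul_sum]
    _ = laplacian d f x + c * laplacian d g x := by rw [← lap_eq, ← lap_eq]

lemma key (b : Esp d) (ℓ : ℕ) :
    ∀ ψ : Esp d → ℝ, ContDiff ℝ (⊤:ℕ∞) ψ →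
      (laplacian d)^[ℓ] (fun y => (inner ℝ b y : ℝ) * laplacian d ψ y
          + (1 - 2 * (ℓ : ℝ)) * Db d b ψ y)
        = fun x => (inner ℝ b x : ℝ) * (laplacian d)^[ℓ + 1] ψ x
            + Db d b ((laplacian d)^[ℓ] ψ) x := by
  induction ℓ with
  | zero =>
    intro ψ hψ
    funext x
    simp
  | succ n ih =>
    intro ψ hψ
    have hlap := contDiff_lap hψ
    have hyp1 : ContDiff ℝ (⊤:ℕ∞) (fun y : Esp d => (inner ℝ b y : ℝ) * laplacian d ψ y) :=
      (contDiff_inner b).mul hlap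
    rw [Function.iterate_succ_apply]
    have step : laplacian d (fun y => (inner ℝ b y : ℝ) * laplacian d ψ y
          + (1 - 2 * ((n + 1 : ℕ) : ℝ)) * Db d b ψ y)
        = fun y => (inner ℝ b y : ℝ) * laplacian d (laplacian d ψ) y
          + (1 - 2 * (n : ℝ)) * Db d b (laplacian d ψ) y := by
      rw [lap_add_smul hyp1 (contDiff_Db hψ) _]
      funext y
      simp only [lap_mul hlap b, lap_Db_comm hψ b]
      push_cast
      ring
    rw [step, ih (laplacian d ψ) hlap,
        Function.iterate_succ_apply (laplacian d) (n + 1) ψ,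
        Function.iterate_succ_apply (laplacian d) n ψ]

end Stmt9Aux

/-- `⟨b,x⟩ Δ^{ℓ+1}φ + ⟨b, ∇(Δ^ℓ φ)⟩ = Δ^ℓ(⟨b,y⟩ Δφ + (1-2ℓ) ⟨b, ∇φ⟩)` for smooth `φ`. -/
theorem stmt9 (d : ℕ) (hd : 1 ≤ d) (b : Esp d) (ℓ : ℕ)
    (φ : Esp d → ℝ) (hφ : ContDiff ℝ (⊤ : ℕ∞) φ) :
    ∀ x : Esp d,
      (inner ℝ b x : ℝ) * ((laplacian d)^[ℓ + 1] φ) x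
          + (inner ℝ b (gradient ((laplacian d)^[ℓ] φ) x) : ℝ) =
        (laplacian d)^[ℓ]
          (fun y => (inner ℝ b y : ℝ) * laplacian d φ y
            + (1 - 2 * (ℓ : ℝ)) * (inner ℝ b (gradient φ y) : ℝ)) x := by
  intro x
  simp only [Stmt9Aux.inner_grad]
  exact (congrFun (Stmt9Aux.key b ℓ φ hφ) x).symm
end
end
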